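/- Fix integers K ≥ 1 and 0 = L_0 < L_1 < ⋯ < L_K = I with group sizes I_k = L_k − L_{k−1} ≥ 2, real data x_1,…,x_I, and constants n > 0 and σ̂ > 0. For ν = (ν_1,…,ν_K) ∈ ℝ^K and ρ = (ρ_1,…,ρ_K) ∈ [0,1)^K define f(ν,ρ) = ∏_{k=1}^K ((1+(I_k−1)ρ_k)(1−ρ_k)^{I_k−1})^{−1/2} · exp(−(n/(2σ̂²)) Σ_{k=1}^K [ (1/(1−ρ_k)) Σ_{i=L_{k−1}+1}^{L_k}(x_i−ν_k)² − (ρ_k/((1+(I_k−1)ρ_k)(1−ρ_k))) ( Σ_{i=L_{k−1}+1}^{L_k}(x_i−ν_k) )² ]). Then the two evidential values Ṽ = inf_{ν∈ℝ^K} [ sup_{ρ∈(0,1)^K} f(ν,ρ) / f(ν,0) ] and V = [ sup_{ρ∈(0,1)^K, ν∈ℝ^K} f(ν,ρ) ] / [ sup_{ν∈ℝ^K} f(ν,0) ] are equal: Ṽ = V. -/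

import Mathlib

open Real Set

/-- The joint density (up to the constant factor `(n/(2πσ̂²))^{I/2}`, which cancels in
all ratios) of the cell averages `x₁,…,x_I` of an ANOVA study with `K` groups of cells,
group `k` consisting of cells `L_{k-1}+1,…,L_k`, with group means `ν_k` and
within-group equicorrelations `ρ_k`. -/
noncomputable def fDensity (K : ℕ) (L : Fin (K + 1) → ℕ) (x : ℕ → ℝ) (n σ : ℝ)
    (ν ρ : Fin K → ℝ) : ℝ :=
  (∏ k : Fin K,
      ((1 + ((L k.succ - L k.castSucc : ℕ) - 1 : ℝ) * ρ k) *
          (1 - ρ k) ^ (L k.succ - L k.castSucc - 1)) ^ (-(1 : ℝ) / 2)) *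
    Real.exp (-(n / (2 * σ ^ 2)) *
      ∑ k : Fin K,
        ((1 / (1 - ρ k)) *
            ∑ i ∈ Finset.Ioc (L k.castSucc) (L k.succ), (x i - ν k) ^ 2 -
          (ρ k / ((1 + ((L k.succ - L k.castSucc : ℕ) - 1 : ℝ) * ρ k) * (1 - ρ k))) *
            (∑ i ∈ Finset.Ioc (L k.castSucc) (L k.succ), (x i - ν k)) ^ 2))

lemma group_identity (t : Finset ℕ) (x : ℕ → ℝ) (hm : 2 ≤ t.card) (ρ ν : ℝ)
    (hρ0 : 0 ≤ ρ) (hρ1 : ρ < 1) :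
    (1 / (1 - ρ)) * ∑ i ∈ t, (x i - ν) ^ 2 -
      (ρ / ((1 + ((t.card : ℝ) - 1) * ρ) * (1 - ρ))) * (∑ i ∈ t, (x i - ν)) ^ 2
    = ((1 / (1 - ρ)) * ∑ i ∈ t, (x i - (∑ j ∈ t, x j) / (t.card : ℝ)) ^ 2 -
      (ρ / ((1 + ((t.card : ℝ) - 1) * ρ) * (1 - ρ))) *
        (∑ i ∈ t, (x i - (∑ j ∈ t, x j) / (t.card : ℝ))) ^ 2) +
      (∑ i ∈ t, (x i - ν)) ^ 2 / ((t.card : ℝ) * (1 + ((t.card : ℝ) - 1) * ρ)) := by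
  have hm' : (2:ℝ) ≤ (t.card : ℝ) := by exact_mod_cast hm
  set m : ℝ := (t.card : ℝ) with hmdef
  have hm0 : m ≠ 0 := by linarith
  set μ : ℝ := (∑ j ∈ t, x j) / m with hμ
  have hmμ : m * μ = ∑ j ∈ t, x j := by rw [hμ]; field_simp
  have hsum : ∑ i ∈ t, (x i - ν) = m * (μ - ν) := by
    rw [Finset.sum_sub_distrib, Finset.sum_const, nsmul_eq_mul, mul_sub, hmμ, ← hmdef]
  have h1 : ∑ i ∈ t, (x i - μ) = 0 := by
    rw [Finset.sum_sub_distrib, Finset.sum_const, nsmul_eq_mul, ← hmdef, ← hmμ]; ring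
  have h2 : ∑ i ∈ t, (x i - ν) ^ 2 = (∑ i ∈ t, (x i - μ) ^ 2) + m * (μ - ν) ^ 2 := by
    have e : ∀ i ∈ t, (x i - ν) ^ 2
        = (x i - μ) ^ 2 + (2 * (μ - ν)) * (x i - μ) + (μ - ν) ^ 2 := fun i _ => by ring
    rw [Finset.sum_congr rfl e, Finset.sum_add_distrib, Finset.sum_add_distrib,
      ← Finset.mul_sum, h1, Finset.sum_const, nsmul_eq_mul, ← hmdef]
    ring
  have hu : (0:ℝ) < 1 - ρ := by linarith
  have ha : (0:ℝ) < 1 + (m - 1) * ρ := by nlinarith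
  rw [h2, h1, hsum]
  have hv : (1 + (m - 1) * ρ) * (1 + (m - 1) * ρ)⁻¹ = 1 := mul_inv_cancel₀ ha.ne'
  field_simp
  linear_combination (-(m * (μ - ν) ^ 2)) * hv


lemma key_identity (K : ℕ) (L : Fin (K + 1) → ℕ)
    (hsize : ∀ k : Fin K, 2 ≤ L k.succ - L k.castSucc)
    (x : ℕ → ℝ) (n σ : ℝ) (ν ρ : Fin K → ℝ) (hρ : ∀ k, 0 ≤ ρ k ∧ ρ k < 1) :
    fDensity K L x n σ ν ρ =
      fDensity K L x n σ
        (fun k => (∑ i ∈ Finset.Ioc (L k.castSucc) (L k.succ), x i) /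
          ((L k.succ - L k.castSucc : ℕ) : ℝ)) ρ *
      Real.exp (-(n / (2 * σ ^ 2)) * ∑ k : Fin K,
        (∑ i ∈ Finset.Ioc (L k.castSucc) (L k.succ), (x i - ν k)) ^ 2 /
          (((L k.succ - L k.castSucc : ℕ) : ℝ) *
            (1 + (((L k.succ - L k.castSucc : ℕ) : ℝ) - 1) * ρ k))) := by
  unfold fDensity
  rw [mul_assoc, ← Real.exp_add, ← mul_add, ← Finset.sum_add_distrib]
  congr 3
  apply Finset.sum_congr rfl
  intro k _
  simp only []
  have hcard : (Finset.Ioc (L k.castSucc) (L k.succ)).card = L k.succ - L k.castSucc :=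
    Nat.card_Ioc _ _
  have h := group_identity (Finset.Ioc (L k.castSucc) (L k.succ)) x
    (by rw [hcard]; exact hsize k) (ρ k) (ν k) (hρ k).1 (hρ k).2
  rw [hcard] at h
  simpa using h


lemma fDensity_pos (K : ℕ) (L : Fin (K + 1) → ℕ)
    (hsize : ∀ k : Fin K, 2 ≤ L k.succ - L k.castSucc)
    (x : ℕ → ℝ) (n σ : ℝ) (ν ρ : Fin K → ℝ) (hρ : ∀ k, 0 ≤ ρ k ∧ ρ k < 1) :
    0 < fDensity K L x n σ ν ρ := by
  unfold fDensity
  apply mul_pos _ (Real.exp_pos _)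
  apply Finset.prod_pos
  intro k _
  apply Real.rpow_pos_of_pos
  have h1 : (0:ℝ) < 1 - ρ k := by linarith [(hρ k).2]
  have h2 : (2:ℝ) ≤ ((L k.succ - L k.castSucc : ℕ) : ℝ) := by exact_mod_cast hsize k
  have h3 : (0:ℝ) < 1 + (((L k.succ - L k.castSucc : ℕ) : ℝ) - 1) * ρ k := by
    nlinarith [(hρ k).1]
  exact mul_pos h3 (pow_pos h1 _)

/-- The two definitions of evidential value coincide: minimizing the likelihood ratio over
the nuisance mean parameters `ν` gives the same value as replacing them by their maximum
likelihood estimators. -/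
theorem tildeV_eq_V (K : ℕ) (hK : 1 ≤ K) (L : Fin (K + 1) → ℕ) (hL0 : L 0 = 0)
    (hLmono : StrictMono L) (hsize : ∀ k : Fin K, 2 ≤ L k.succ - L k.castSucc)
    (x : ℕ → ℝ) (n σ : ℝ) (hn : 0 < n) (hσ : 0 < σ) :
    sInf ((fun ν : Fin K → ℝ =>
        sSup ((fun ρ => fDensity K L x n σ ν ρ) '' {ρ | ∀ k, ρ k ∈ Ioo (0 : ℝ) 1}) /
          fDensity K L x n σ ν 0) '' univ) =
      sSup ((fun p : (Fin K → ℝ) × (Fin K → ℝ) => fDensity K L x n σ p.1 p.2) ''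
          {p | ∀ k, p.2 k ∈ Ioo (0 : ℝ) 1}) /
        sSup ((fun ν : Fin K → ℝ => fDensity K L x n σ ν 0) '' univ) := by
  classical
  set Ω : Set (Fin K → ℝ) := {ρ | ∀ k, ρ k ∈ Ioo (0 : ℝ) 1} with hΩdef
  set νs : Fin K → ℝ := fun k => (∑ i ∈ Finset.Ioc (L k.castSucc) (L k.succ), x i) /
      ((L k.succ - L k.castSucc : ℕ) : ℝ) with hνs
  set E : (Fin K → ℝ) → (Fin K → ℝ) → ℝ := fun ν ρ =>
    Real.exp (-(n / (2 * σ ^ 2)) * ∑ k : Fin K,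
      (∑ i ∈ Finset.Ioc (L k.castSucc) (L k.succ), (x i - ν k)) ^ 2 /
        (((L k.succ - L k.castSucc : ℕ) : ℝ) *
          (1 + (((L k.succ - L k.castSucc : ℕ) : ℝ) - 1) * ρ k))) with hEdef
  have hΩ' : ∀ ρ ∈ Ω, ∀ k, 0 ≤ ρ k ∧ ρ k < 1 := fun ρ h k => ⟨(h k).1.le, (h k).2⟩
  have h0 : ∀ k, 0 ≤ (0 : Fin K → ℝ) k ∧ (0 : Fin K → ℝ) k < 1 := fun k => by
    simp
  have hhalf : (fun _ => (1:ℝ)/2) ∈ Ω := fun k => ⟨by norm_num, by norm_num⟩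
  have hc : 0 < n / (2 * σ ^ 2) := by positivity
  have hm2 : ∀ k : Fin K, (2:ℝ) ≤ ((L k.succ - L k.castSucc : ℕ) : ℝ) := fun k => by
    exact_mod_cast hsize k
  have hkey : ∀ ν ρ, (∀ k, 0 ≤ ρ k ∧ ρ k < 1) →
      fDensity K L x n σ ν ρ = fDensity K L x n σ νs ρ * E ν ρ :=
    fun ν ρ h => key_identity K L hsize x n σ ν ρ h
  have hpos : ∀ ν ρ, (∀ k, 0 ≤ ρ k ∧ ρ k < 1) → 0 < fDensity K L x n σ ν ρ :=
    fun ν ρ h => fDensity_pos K L hsize x n σ ν ρ h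
  have hEle : ∀ ν ρ, (∀ k, 0 ≤ ρ k ∧ ρ k < 1) → E ν ρ ≤ 1 := by
    intro ν ρ h
    rw [hEdef]
    apply Real.exp_le_one_iff.mpr
    have hs : 0 ≤ ∑ k : Fin K,
        (∑ i ∈ Finset.Ioc (L k.castSucc) (L k.succ), (x i - ν k)) ^ 2 /
          (((L k.succ - L k.castSucc : ℕ) : ℝ) *
            (1 + (((L k.succ - L k.castSucc : ℕ) : ℝ) - 1) * ρ k)) := by
      apply Finset.sum_nonneg
      intro k _
      have := hm2 k
      have h1 := (h k).1
      have hd : (0:ℝ) ≤ ((L k.succ - L k.castSucc : ℕ) : ℝ) *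
          (1 + (((L k.succ - L k.castSucc : ℕ) : ℝ) - 1) * ρ k) := by
        have hp : (0:ℝ) ≤ (((L k.succ - L k.castSucc : ℕ) : ℝ) - 1) * ρ k :=
          mul_nonneg (by linarith) h1
        nlinarith
      exact div_nonneg (sq_nonneg _) hd
    nlinarith [mul_nonneg hc.le hs]
  have hEge : ∀ ν ρ, (∀ k, 0 ≤ ρ k ∧ ρ k < 1) → E ν 0 ≤ E ν ρ := by
    intro ν ρ h
    rw [hEdef]
    apply Real.exp_le_exp.mpr
    apply mul_le_mul_of_nonpos_left _ (by linarith : -(n / (2 * σ ^ 2)) ≤ 0)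
    apply Finset.sum_le_sum
    intro k _
    have hm := hm2 k
    have h1 := (h k).1
    have hb : (0:ℝ) < ((L k.succ - L k.castSucc : ℕ) : ℝ) *
        (1 + (((L k.succ - L k.castSucc : ℕ) : ℝ) - 1) * (0 : Fin K → ℝ) k) := by
      simp only [Pi.zero_apply, mul_zero, add_zero, mul_one]
      linarith
    have hbc : ((L k.succ - L k.castSucc : ℕ) : ℝ) *
        (1 + (((L k.succ - L k.castSucc : ℕ) : ℝ) - 1) * (0 : Fin K → ℝ) k) ≤
        ((L k.succ - L k.castSucc : ℕ) : ℝ) *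
        (1 + (((L k.succ - L k.castSucc : ℕ) : ℝ) - 1) * ρ k) := by
      simp only [Pi.zero_apply, mul_zero, add_zero, mul_one]
      have hp : (0:ℝ) ≤ (((L k.succ - L k.castSucc : ℕ) : ℝ) - 1) * ρ k :=
        mul_nonneg (by linarith) h1
      nlinarith
    exact div_le_div_of_nonneg_left (sq_nonneg _) hb hbc
  have hFle : ∀ ν ρ, (∀ k, 0 ≤ ρ k ∧ ρ k < 1) →
      fDensity K L x n σ ν ρ ≤ fDensity K L x n σ νs ρ := by
    intro ν ρ h
    rw [hkey ν ρ h]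
    exact mul_le_of_le_one_right (hpos νs ρ h).le (hEle ν ρ h)
  have hFge : ∀ ν ρ, (∀ k, 0 ≤ ρ k ∧ ρ k < 1) →
      fDensity K L x n σ νs ρ * E ν 0 ≤ fDensity K L x n σ ν ρ := by
    intro ν ρ h
    rw [hkey ν ρ h]
    exact mul_le_mul_of_nonneg_left (hEge ν ρ h) (hpos νs ρ h).le
  have hD : ∀ ν, fDensity K L x n σ ν 0 = fDensity K L x n σ νs 0 * E ν 0 :=
    fun ν => hkey ν 0 h0
  have hDpos : ∀ ν, 0 < fDensity K L x n σ ν 0 := fun ν => hpos ν 0 h0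
  have hE0pos : ∀ ν, 0 < E ν 0 := fun ν => Real.exp_pos _
  have hE0le : ∀ ν : Fin K → ℝ, E ν 0 ≤ 1 := fun ν => hEle ν 0 h0
  set Gs : Set ℝ := (fun ρ => fDensity K L x n σ νs ρ) '' Ω with hGsdef
  have hGne : Gs.Nonempty := ⟨_, ⟨_, hhalf, rfl⟩⟩
  -- denominator
  have hden : sSup ((fun ν : Fin K → ℝ => fDensity K L x n σ ν 0) '' univ)
      = fDensity K L x n σ νs 0 := by
    apply IsGreatest.csSup_eq
    constructor
    · exact ⟨νs, mem_univ _, rfl⟩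
    · rintro y ⟨ν, -, rfl⟩
      calc fDensity K L x n σ ν 0 = fDensity K L x n σ νs 0 * E ν 0 := hD ν
        _ ≤ fDensity K L x n σ νs 0 * 1 :=
          mul_le_mul_of_nonneg_left (hE0le ν) (hDpos νs).le
        _ = fDensity K L x n σ νs 0 := mul_one _
  -- numerator
  have hGsub : Gs ⊆ (fun p : (Fin K → ℝ) × (Fin K → ℝ) => fDensity K L x n σ p.1 p.2) ''
      {p | ∀ k, p.2 k ∈ Ioo (0 : ℝ) 1} := by
    rintro y ⟨ρ, hρ, rfl⟩
    exact ⟨(νs, ρ), hρ, rfl⟩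
  have hnum : sSup ((fun p : (Fin K → ℝ) × (Fin K → ℝ) => fDensity K L x n σ p.1 p.2) ''
      {p | ∀ k, p.2 k ∈ Ioo (0 : ℝ) 1}) = sSup Gs := by
    by_cases hB : BddAbove Gs
    · apply le_antisymm
      · apply Real.sSup_le
        · rintro y ⟨⟨ν, ρ⟩, hρ, rfl⟩
          exact (hFle ν ρ (hΩ' ρ hρ)).trans (le_csSup hB ⟨ρ, hρ, rfl⟩)
        · exact le_trans (hpos νs _ (hΩ' _ hhalf)).le (le_csSup hB ⟨_, hhalf, rfl⟩)
      · apply csSup_le_csSup _ hGne hGsub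
        obtain ⟨u, hu⟩ := hB
        refine ⟨u, ?_⟩
        rintro y ⟨⟨ν, ρ⟩, hρ, rfl⟩
        exact (hFle ν ρ (hΩ' ρ hρ)).trans (hu ⟨ρ, hρ, rfl⟩)
    · rw [Real.sSup_of_not_bddAbove hB,
        Real.sSup_of_not_bddAbove (fun h => hB (BddAbove.mono hGsub h))]
  -- key lower bound
  have hlb : ∀ ν : Fin K → ℝ,
      sSup Gs / fDensity K L x n σ νs 0 ≤
        sSup ((fun ρ => fDensity K L x n σ ν ρ) '' Ω) / fDensity K L x n σ ν 0 := by
    intro ν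
    by_cases hB : BddAbove Gs
    · have hBν : BddAbove ((fun ρ => fDensity K L x n σ ν ρ) '' Ω) := by
        obtain ⟨u, hu⟩ := hB
        refine ⟨u, ?_⟩
        rintro y ⟨ρ, hρ, rfl⟩
        exact (hFle ν ρ (hΩ' ρ hρ)).trans (hu ⟨ρ, hρ, rfl⟩)
      set Sν := sSup ((fun ρ => fDensity K L x n σ ν ρ) '' Ω) with hSν
      have hSνpos : 0 < Sν :=
        lt_of_lt_of_le (hpos ν _ (hΩ' _ hhalf)) (le_csSup hBν ⟨_, hhalf, rfl⟩)
      rw [div_le_div_iff₀ (hDpos νs) (hDpos ν)]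
      have hstep : sSup Gs ≤ Sν * fDensity K L x n σ νs 0 / fDensity K L x n σ ν 0 := by
        apply Real.sSup_le
        · rintro y ⟨ρ, hρ, rfl⟩
          rw [le_div_iff₀ (hDpos ν)]
          calc fDensity K L x n σ νs ρ * fDensity K L x n σ ν 0
              = (fDensity K L x n σ νs ρ * E ν 0) * fDensity K L x n σ νs 0 := by
                rw [hD ν]; ring
            _ ≤ fDensity K L x n σ ν ρ * fDensity K L x n σ νs 0 :=
                mul_le_mul_of_nonneg_right (hFge ν ρ (hΩ' ρ hρ)) (hDpos νs).le
            _ ≤ Sν * fDensity K L x n σ νs 0 :=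
                mul_le_mul_of_nonneg_right (le_csSup hBν ⟨ρ, hρ, rfl⟩) (hDpos νs).le
        · exact div_nonneg (mul_nonneg hSνpos.le (hDpos νs).le) (hDpos ν).le
      calc sSup Gs * fDensity K L x n σ ν 0
          ≤ (Sν * fDensity K L x n σ νs 0 / fDensity K L x n σ ν 0) *
            fDensity K L x n σ ν 0 :=
            mul_le_mul_of_nonneg_right hstep (hDpos ν).le
        _ = Sν * fDensity K L x n σ νs 0 := div_mul_cancel₀ _ (hDpos ν).ne'
    · have hBν : ¬ BddAbove ((fun ρ => fDensity K L x n σ ν ρ) '' Ω) := by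
        intro h
        obtain ⟨u, hu⟩ := h
        apply hB
        refine ⟨u / E ν 0, ?_⟩
        rintro y ⟨ρ, hρ, rfl⟩
        rw [le_div_iff₀ (hE0pos ν)]
        exact (hFge ν ρ (hΩ' ρ hρ)).trans (hu ⟨ρ, hρ, rfl⟩)
      rw [Real.sSup_of_not_bddAbove hB, Real.sSup_of_not_bddAbove hBν, zero_div, zero_div]
  -- assemble
  rw [hden, hnum]
  apply le_antisymm
  · exact csInf_le ⟨sSup Gs / fDensity K L x n σ νs 0,
      by rintro y ⟨ν, -, rfl⟩; exact hlb ν⟩ ⟨νs, mem_univ _, rfl⟩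
  · exact le_csInf ⟨_, ⟨νs, mem_univ _, rfl⟩⟩ (by rintro y ⟨ν, -, rfl⟩; exact hlb ν)
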